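/- Suppose every outcome in X is Pareto optimal for the profile (≿_i)_{i∈N}, and let (≿'_i)_{i∈N} be the reversed profile defined by x ≿'_i y ⟺ y ≿_i x for all i, x, y. Then the set of ex-ante efficient lotteries differs from the set of ex-post efficient lotteries for (≿_i)_{i∈N} if and only if it does for (≿'_i)_{i∈N}. -/

import Mathlib

attribute [local instance] Classical.propDecidable

/-- The strict part of a preference relation. -/
def strictPref {X : Type*} (r : X → X → Prop) (x y : X) : Prop := r x y ∧ ¬ r y x

/-- A preference: a complete (total) and transitive binary relation. -/
def IsPrefOrder {X : Type*} (r : X → X → Prop) : Prop :=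
  (∀ x y, r x y ∨ r y x) ∧ Transitive r

/-- A lottery over the finite set of outcomes `X`. -/
def IsLottery {X : Type*} [Fintype X] (p : X → ℝ) : Prop :=
  (∀ x, 0 ≤ p x) ∧ ∑ x, p x = 1

/-- Total weight a lottery `p` places on outcomes strictly preferred to `x`. -/
noncomputable def upWeight {X : Type*} [Fintype X] (r : X → X → Prop) (p : X → ℝ) (x : X) : ℝ :=
  ∑ y ∈ Finset.univ.filter (fun y => strictPref r y x), p y

/-- First-order stochastic dominance (weak): `p ≿ q`. -/
def SDge {X : Type*} [Fintype X] (r : X → X → Prop) (p q : X → ℝ) : Prop :=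
  ∀ x, upWeight r q x ≤ upWeight r p x

/-- First-order stochastic dominance (strict): `p ≻ q`. -/
def SDgt {X : Type*} [Fintype X] (r : X → X → Prop) (p q : X → ℝ) : Prop :=
  SDge r p q ∧ ∃ x, upWeight r q x < upWeight r p x

/-- A lottery `p` is ex-ante efficient if no lottery weakly SD-dominates it for all agents
and strictly for some agent. -/
def ExAnteEff {X N : Type*} [Fintype X] (pref : N → X → X → Prop) (p : X → ℝ) : Prop :=
  ¬ ∃ q : X → ℝ, IsLottery q ∧ (∀ i, SDge (pref i) q p) ∧ ∃ j, SDgt (pref j) q p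

/-- An outcome is Pareto optimal if no outcome is weakly better for all agents and
strictly better for some agent. -/
def ParetoOptimal {X N : Type*} (pref : N → X → X → Prop) (x : X) : Prop :=
  ¬ ∃ y, (∀ i, pref i y x) ∧ ∃ j, strictPref (pref j) y x

/-- A lottery is ex-post efficient if it is supported on Pareto optimal outcomes. -/
def ExPostEff {X N : Type*} [Fintype X] (pref : N → X → X → Prop) (p : X → ℝ) : Prop :=
  ∀ x, 0 < p x → ParetoOptimal pref x

/-- `u` is a utility representation of the preference `r`. -/
def Represents {X : Type*} (u : X → ℝ) (r : X → X → Prop) : Prop :=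
  ∀ x y, (u y ≤ u x ↔ r x y)

section Aux

open Finset

variable {X : Type*} [Fintype X]

/-- A finite total preorder has a ℕ-valued utility representation. -/
lemma exists_nat_rep {r : X → X → Prop} (h : IsPrefOrder r) :
    ∃ u : X → ℕ, ∀ x y, u y ≤ u x ↔ r x y := by
  refine ⟨fun x => (univ.filter (fun y => r x y)).card, fun x y => ?_⟩
  constructor
  · intro hle
    by_contra hxy
    have hyx : r y x := (h.1 x y).resolve_left hxy
    have hsub : univ.filter (fun z => r x z) ⊆ univ.filter (fun z => r y z) := by
      intro z hz
      simp only [mem_filter, mem_univ, true_and] at hz ⊢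
      exact h.2 hyx hz
    have hy : y ∈ univ.filter (fun z => r y z) := by
      simp only [mem_filter, mem_univ, true_and]
      exact (h.1 y y).elim id id
    have hy' : y ∉ univ.filter (fun z => r x z) := by
      simp only [mem_filter, mem_univ, true_and]
      exact hxy
    have hlt := card_lt_card ((ssubset_iff_of_subset hsub).2 ⟨y, hy, hy'⟩)
    exact absurd hle (not_le.mpr hlt)
  · intro hxy
    apply card_le_card
    intro z hz
    simp only [mem_filter, mem_univ, true_and] at hz ⊢
    exact h.2 hxy hz

/-- Strict weight above `x`, in terms of a utility. -/
noncomputable def upW (u : X → ℕ) (p : X → ℝ) (x : X) : ℝ :=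
  ∑ y ∈ univ.filter (fun y => u x < u y), p y

/-- Weak weight above `x`, in terms of a utility. -/
noncomputable def wkW (u : X → ℕ) (p : X → ℝ) (x : X) : ℝ :=
  ∑ y ∈ univ.filter (fun y => u x ≤ u y), p y

lemma upWeight_eq_upW {r : X → X → Prop} {u : X → ℕ} (hu : ∀ x y, u y ≤ u x ↔ r x y)
    (p : X → ℝ) (x : X) : upWeight r p x = upW u p x := by
  unfold upWeight upW
  congr 1
  ext y
  simp only [mem_filter, mem_univ, true_and]
  simp only [strictPref]
  rw [← hu x y, ← hu y x]
  omega

lemma upWeight_rev_eq {r : X → X → Prop} {u : X → ℕ} (hu : ∀ x y, u y ≤ u x ↔ r x y)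
    (p : X → ℝ) (x : X) :
    upWeight (fun a b => r b a) p x = ∑ y ∈ univ.filter (fun y => u y < u x), p y := by
  unfold upWeight
  congr 1
  ext y
  simp only [mem_filter, mem_univ, true_and]
  simp only [strictPref]
  rw [← hu x y, ← hu y x]
  omega

lemma low_add_wk (u : X → ℕ) (p : X → ℝ) (x : X) :
    (∑ y ∈ univ.filter (fun y => u y < u x), p y) + wkW u p x = ∑ y, p y := by
  have hfe : univ.filter (fun y => u y < u x) = univ.filter (fun y => ¬ u x ≤ u y) := by
    ext y
    simp only [mem_filter, mem_univ, true_and]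
    omega
  unfold wkW
  rw [hfe, add_comm]
  exact Finset.sum_filter_add_sum_filter_not univ (fun y => u x ≤ u y) p

lemma filter_eq_of_min (u : X → ℕ) {x z : X} (hz : u x < u z)
    (hmin : ∀ y : X, u x < u y → u z ≤ u y) :
    univ.filter (fun y => u x < u y) = univ.filter (fun y => u z ≤ u y) := by
  ext y
  simp only [mem_filter, mem_univ, true_and]
  constructor
  · exact fun h => hmin y h
  · intro h; omega

lemma filter_eq_of_max (u : X → ℕ) {x z : X} (hz : u z < u x)
    (hmax : ∀ y : X, u y < u x → u y ≤ u z) :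
    univ.filter (fun y => u x ≤ u y) = univ.filter (fun y => u z < u y) := by
  ext y
  simp only [mem_filter, mem_univ, true_and]
  constructor
  · intro h; omega
  · intro h
    by_contra h'
    push_neg at h'
    have := hmax y (by omega)
    omega

lemma wk_le_of_up_le (u : X → ℕ) {p q : X → ℝ}
    (hp : ∑ x, p x = 1) (hq : ∑ x, q x = 1)
    (h : ∀ x, upW u q x ≤ upW u p x) : ∀ x, wkW u q x ≤ wkW u p x := by
  intro x
  by_cases hb : (univ.filter (fun z => u z < u x)).Nonempty
  · obtain ⟨z, hz, hzmax⟩ := Finset.exists_max_image _ u hb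
    simp only [mem_filter, mem_univ, true_and] at hz
    have hmax : ∀ y : X, u y < u x → u y ≤ u z := by
      intro y hy
      exact hzmax y (by simp only [mem_filter, mem_univ, true_and]; exact hy)
    have heq := filter_eq_of_max u hz hmax
    unfold wkW
    rw [heq]
    exact h z
  · have heq : univ.filter (fun y => u x ≤ u y) = univ := by
      ext y
      simp only [mem_filter, mem_univ, true_and, iff_true]
      by_contra h'
      exact hb ⟨y, by simp only [mem_filter, mem_univ, true_and]; omega⟩
    unfold wkW
    rw [heq, hp, hq]

lemma up_le_of_wk_le (u : X → ℕ) {p q : X → ℝ}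
    (h : ∀ x, wkW u q x ≤ wkW u p x) : ∀ x, upW u q x ≤ upW u p x := by
  intro x
  by_cases ha : (univ.filter (fun z => u x < u z)).Nonempty
  · obtain ⟨z, hz, hzmin⟩ := Finset.exists_min_image _ u ha
    simp only [mem_filter, mem_univ, true_and] at hz
    have hmin : ∀ y : X, u x < u y → u z ≤ u y := by
      intro y hy
      exact hzmin y (by simp only [mem_filter, mem_univ, true_and]; exact hy)
    have heq := filter_eq_of_min u hz hmin
    unfold upW
    rw [heq]
    exact h z
  · have heq : univ.filter (fun y => u x < u y) = (∅ : Finset X) := by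
      rw [Finset.not_nonempty_iff_eq_empty] at ha
      exact ha
    unfold upW
    rw [heq]
    simp

lemma strict_iff (u : X → ℕ) {p q : X → ℝ} (hp : IsLottery p) (hq : IsLottery q) :
    (∃ x, upW u q x < upW u p x) ↔ (∃ x, wkW u q x < wkW u p x) := by
  constructor
  · rintro ⟨x, hx⟩
    have hq0 : 0 ≤ upW u q x := Finset.sum_nonneg fun y _ => hq.1 y
    have hpos : 0 < upW u p x := lt_of_le_of_lt hq0 hx
    have hne : (univ.filter (fun z => u x < u z)).Nonempty := by
      by_contra h'
      rw [Finset.not_nonempty_iff_eq_empty] at h'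
      unfold upW at hpos
      rw [h'] at hpos
      simp at hpos
    obtain ⟨z, hz, hzmin⟩ := Finset.exists_min_image _ u hne
    simp only [mem_filter, mem_univ, true_and] at hz
    have hmin : ∀ y : X, u x < u y → u z ≤ u y := by
      intro y hy
      exact hzmin y (by simp only [mem_filter, mem_univ, true_and]; exact hy)
    have heq := filter_eq_of_min u hz hmin
    refine ⟨z, ?_⟩
    unfold upW at hx
    unfold wkW
    rw [← heq]
    exact hx
  · rintro ⟨x, hx⟩
    have hwkp : wkW u p x ≤ ∑ y, p y := by
      unfold wkW
      exact Finset.sum_le_sum_of_subset_of_nonneg (Finset.filter_subset _ _)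
        (fun y _ _ => hp.1 y)
    have hlow : 0 < ∑ y ∈ univ.filter (fun y => u y < u x), q y := by
      have h1 := low_add_wk u q x
      have h2 : wkW u q x < ∑ y, q y := by
        rw [hq.2, ← hp.2]
        exact lt_of_lt_of_le hx hwkp
      linarith
    have hne : (univ.filter (fun z => u z < u x)).Nonempty := by
      by_contra h'
      rw [Finset.not_nonempty_iff_eq_empty] at h'
      rw [h'] at hlow
      simp at hlow
    obtain ⟨z, hz, hzmax⟩ := Finset.exists_max_image _ u hne
    simp only [mem_filter, mem_univ, true_and] at hz
    have hmax : ∀ y : X, u y < u x → u y ≤ u z := by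
      intro y hy
      exact hzmax y (by simp only [mem_filter, mem_univ, true_and]; exact hy)
    have heq := filter_eq_of_max u hz hmax
    refine ⟨z, ?_⟩
    unfold wkW at hx
    unfold upW
    rw [← heq]
    exact hx

/-- Dominance under the reversed preference is reversed dominance. -/
lemma SDge_rev_iff {r : X → X → Prop} (h : IsPrefOrder r) {p q : X → ℝ}
    (hp : IsLottery p) (hq : IsLottery q) :
    SDge (fun a b => r b a) p q ↔ SDge r q p := by
  obtain ⟨u, hu⟩ := exists_nat_rep h
  constructor
  · intro hsd x
    rw [upWeight_eq_upW hu, upWeight_eq_upW hu]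
    apply up_le_of_wk_le u
    intro y
    have := hsd y
    rw [upWeight_rev_eq hu, upWeight_rev_eq hu] at this
    have h1 := low_add_wk u p y
    have h2 := low_add_wk u q y
    rw [hp.2] at h1
    rw [hq.2] at h2
    linarith
  · intro hsd x
    rw [upWeight_rev_eq hu, upWeight_rev_eq hu]
    have h1 := low_add_wk u p x
    have h2 := low_add_wk u q x
    rw [hp.2] at h1
    rw [hq.2] at h2
    have hw := wk_le_of_up_le u hq.2 hp.2
      (fun y => by
        have := hsd y
        rw [upWeight_eq_upW hu, upWeight_eq_upW hu] at this
        exact this) x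
    linarith

lemma SDgt_rev_iff {r : X → X → Prop} (h : IsPrefOrder r) {p q : X → ℝ}
    (hp : IsLottery p) (hq : IsLottery q) :
    SDgt (fun a b => r b a) p q ↔ SDgt r q p := by
  obtain ⟨u, hu⟩ := exists_nat_rep h
  unfold SDgt
  rw [SDge_rev_iff h hp hq]
  apply and_congr_right
  intro _
  have key : (∃ x, upWeight (fun a b => r b a) q x < upWeight (fun a b => r b a) p x) ↔
      (∃ x, wkW u p x < wkW u q x) := by
    constructor
    · rintro ⟨x, hx⟩
      rw [upWeight_rev_eq hu, upWeight_rev_eq hu] at hx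
      have h1 := low_add_wk u p x
      have h2 := low_add_wk u q x
      rw [hp.2] at h1
      rw [hq.2] at h2
      exact ⟨x, by linarith⟩
    · rintro ⟨x, hx⟩
      refine ⟨x, ?_⟩
      rw [upWeight_rev_eq hu, upWeight_rev_eq hu]
      have h1 := low_add_wk u p x
      have h2 := low_add_wk u q x
      rw [hp.2] at h1
      rw [hq.2] at h2
      linarith
  rw [key, ← strict_iff u hq hp]
  constructor
  · rintro ⟨x, hx⟩
    exact ⟨x, by rw [upWeight_eq_upW hu, upWeight_eq_upW hu]; exact hx⟩
  · rintro ⟨x, hx⟩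
    rw [upWeight_eq_upW hu, upWeight_eq_upW hu] at hx
    exact ⟨x, hx⟩

end Aux

/-- If all outcomes are Pareto optimal, ex-ante efficiency differs from
ex-post efficiency for a profile iff it differs for the reversed profile. -/
theorem stmt_11 {X N : Type*} [Fintype X] [Nonempty X] [Fintype N] [Nonempty N]
    (pref : N → X → X → Prop) (hpref : ∀ i, IsPrefOrder (pref i))
    (hall : ∀ x : X, ParetoOptimal pref x) :
    ({p : X → ℝ | IsLottery p ∧ ExAnteEff pref p} ≠
        {p : X → ℝ | IsLottery p ∧ ExPostEff pref p}) ↔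
      ({p : X → ℝ | IsLottery p ∧ ExAnteEff (fun i x y => pref i y x) p} ≠
        {p : X → ℝ | IsLottery p ∧ ExPostEff (fun i x y => pref i y x) p}) := by
  -- every outcome is Pareto optimal for the reversed profile as well
  have hall' : ∀ x : X, ParetoOptimal (fun i x y => pref i y x) x := by
    intro x hx
    obtain ⟨y, hy, j, hj⟩ := hx
    exact hall y ⟨x, hy, j, hj.1, hj.2⟩
  -- ex-post efficient lotteries are all lotteries, for both profiles
  have hE : ∀ (P : N → X → X → Prop), (∀ x, ParetoOptimal P x) →
      {p : X → ℝ | IsLottery p ∧ ExPostEff P p} = {p : X → ℝ | IsLottery p} := by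
    intro P hP
    ext p
    simp only [Set.mem_setOf_eq, and_iff_left_iff_imp]
    exact fun _ x _ => hP x
  have hkey : ∀ (A : (X → ℝ) → Prop),
      (({p : X → ℝ | IsLottery p ∧ A p} : Set (X → ℝ)) ≠ {p : X → ℝ | IsLottery p}) ↔
        ∃ p, IsLottery p ∧ ¬ A p := by
    intro A
    constructor
    · intro hne
      by_contra h
      push_neg at h
      apply hne
      ext p
      simp only [Set.mem_setOf_eq, and_iff_left_iff_imp]
      exact h p
    · rintro ⟨p, hl, ha⟩ heq
      have hmem : p ∈ {p : X → ℝ | IsLottery p ∧ A p} := by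
        rw [heq]
        exact hl
      exact ha hmem.2
  rw [hE pref hall, hE _ hall', hkey (ExAnteEff pref),
    hkey (ExAnteEff (fun i x y => pref i y x))]
  constructor
  · rintro ⟨p, hp, hnae⟩
    simp only [ExAnteEff, not_not] at hnae
    obtain ⟨q, hq, hge, j, hgt⟩ := hnae
    refine ⟨q, hq, ?_⟩
    simp only [ExAnteEff, not_not]
    refine ⟨p, hp, fun i => ?_, j, ?_⟩
    · exact (SDge_rev_iff (hpref i) hp hq).mpr (hge i)
    · exact (SDgt_rev_iff (hpref j) hp hq).mpr hgt
  · rintro ⟨p, hp, hnae⟩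
    simp only [ExAnteEff, not_not] at hnae
    obtain ⟨q, hq, hge, j, hgt⟩ := hnae
    refine ⟨q, hq, ?_⟩
    simp only [ExAnteEff, not_not]
    refine ⟨p, hp, fun i => ?_, j, ?_⟩
    · exact (SDge_rev_iff (hpref i) hq hp).mp (hge i)
    · exact (SDgt_rev_iff (hpref j) hq hp).mp hgt
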